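/- arXiv:1504.00167 — 2 statements merged into one kernel-verified Lean document; each statement's English description precedes it below -/
import Mathlib

section
/- Let V be an abelian group and 0 = V₀ ≤ V₁ ≤ … ≤ V_ℓ = V a chain of subgroups. Let H be a group of automorphisms of V such that every h ∈ H maps each Vᵢ into itself and acts trivially on each quotient V_{i+1}/V_i. Then H is nilpotent of nilpotency class at most ℓ - 1 (in particular solvable). -/
/-- The subgroup of `H` of automorphisms `g` with `g v - v ∈ C (i - m)` for all `v ∈ C i`. -/
def kalSub {V : Type*} [AddCommGroup V] (C : ℕ → AddSubgroup V) (ℓ : ℕ)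
    (H : Subgroup (Multiplicative (AddAut V)))
    (hstab : ∀ h ∈ H, ∀ i ≤ ℓ, ∀ v ∈ C i, Multiplicative.toAdd h v ∈ C i) (m : ℕ) : Subgroup H where
  carrier := {g | ∀ i ≤ ℓ, ∀ v ∈ C i, ((g : Multiplicative (AddAut V)).toAdd) v - v ∈ C (i - m)}
  one_mem' := by
    intro i hi v hv
    simpa using (C (i - m)).zero_mem
  mul_mem' := by
    intro a b ha hb i hi v hv
    have hbv : ((b : Multiplicative (AddAut V)).toAdd) v ∈ C i := hstab b b.2 i hi v hv
    have h1 := ha i hi _ hbv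
    have h2 := hb i hi v hv
    have e : (((a * b : H) : Multiplicative (AddAut V)).toAdd) v - v =
        (((a : Multiplicative (AddAut V)).toAdd) (((b : Multiplicative (AddAut V)).toAdd) v) - ((b : Multiplicative (AddAut V)).toAdd) v) + (((b : Multiplicative (AddAut V)).toAdd) v - v) := by
      push_cast
      simp [AddAut.add_apply]
    rw [e]
    exact (C _).add_mem h1 h2
  inv_mem' := by
    intro a ha i hi v hv
    have hiv : (((a⁻¹ : H) : Multiplicative (AddAut V)).toAdd) v ∈ C i := hstab _ (a⁻¹).2 i hi v hv
    have h1 := ha i hi _ hiv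
    have e : (((a⁻¹ : H) : Multiplicative (AddAut V)).toAdd) v - v = -(((a : Multiplicative (AddAut V)).toAdd) ((((a⁻¹ : H) : Multiplicative (AddAut V)).toAdd) v) - (((a⁻¹ : H) : Multiplicative (AddAut V)).toAdd) v) := by
      push_cast
      simp
    rw [e]
    exact (C _).neg_mem h1

/-- Kaloujnine's stability group bound: if a group `H` of (additive) automorphisms of an
abelian group `V` stabilizes a chain `⊥ = C 0 ≤ C 1 ≤ … ≤ C ℓ = ⊤` of subgroups and acts
trivially on all successive quotients, then `H` is nilpotent of class at most `ℓ - 1`. -/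
theorem stmt1 (V : Type*) [AddCommGroup V] (ℓ : ℕ) (hℓ : 1 ≤ ℓ)
    (C : ℕ → AddSubgroup V) (hbot : C 0 = ⊥) (htop : C ℓ = ⊤)
    (hchain : ∀ i < ℓ, C i ≤ C (i + 1))
    (H : Subgroup (Multiplicative (AddAut V)))
    (hstab : ∀ h ∈ H, ∀ i ≤ ℓ, ∀ v ∈ C i, Multiplicative.toAdd h v ∈ C i)
    (htriv : ∀ h ∈ H, ∀ i < ℓ, ∀ v ∈ C (i + 1), Multiplicative.toAdd h v - v ∈ C i) :
    lowerCentralSeries H (ℓ - 1) = ⊥ := by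
  have hmono : ∀ i j, i ≤ j → j ≤ ℓ → C i ≤ C j := by
    intro i j hij hj
    induction j with
    | zero => simp [Nat.le_zero.mp hij]
    | succ k ih =>
      rcases Nat.lt_or_ge i (k+1) with h | h
      · exact le_trans (ih (Nat.lt_succ_iff.mp h) (le_trans (Nat.le_succ k) hj))
          (hchain k (Nat.lt_of_succ_le hj))
      · have : i = k + 1 := le_antisymm hij h
        simp [this]
  -- every element of H moves C i into C (i-1)
  have base : ∀ h : H, ∀ i ≤ ℓ, ∀ v ∈ C i, ((h : Multiplicative (AddAut V)).toAdd) v - v ∈ C (i - 1) := by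
    intro h i hi v hv
    cases i with
    | zero =>
      rw [hbot] at hv ⊢
      simp [AddSubgroup.mem_bot.mp hv]
    | succ j => simpa using htriv h h.2 j (Nat.lt_of_succ_le hi) v hv
  have key : ∀ n, lowerCentralSeries H n ≤ (kalSub C ℓ H hstab (n + 1)).map H.subtype := by
    intro n
    induction n with
    | zero =>
      intro g hg
      refine ⟨⟨g, hg⟩, ?_, rfl⟩
      intro i hi v hv
      exact base _ i hi v hv
    | succ n ih =>
      show ⁅Subgroup.lowerCentralSeries H n, H⁆ ≤ _
      rw [Subgroup.commutator_def, Subgroup.closure_le]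
      rintro x ⟨a0, ha0, b0, hb0, rfl⟩
      obtain ⟨a, ha, rfl⟩ := ih ha0
      lift b0 to H using hb0 with b
      refine ⟨a * b * a⁻¹ * b⁻¹, ?_, rfl⟩
      intro i hi v hv
      set α := ((a : Multiplicative (AddAut V)).toAdd) with hα
      set β := ((b : Multiplicative (AddAut V)).toAdd) with hβ
      have hainv : ∀ w ∈ C i, (-α) w ∈ C i := fun w hw => hstab _ (a⁻¹).2 i hi w hw
      have hbinv : ∀ w ∈ C i, (-β) w ∈ C i := fun w hw => hstab _ (b⁻¹).2 i hi w hw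
      set x := (-α) ((-β) v) with hx
      have hxC : x ∈ C i := hainv _ (hbinv _ hv)
      have hbxC : β x ∈ C i := hstab _ b.2 i hi _ hxC
      have haxC : α x ∈ C i := hstab _ a.2 i hi _ hxC
      -- y = βx - x ∈ C (i-1)
      have hy : β x - x ∈ C (i - 1) := base b i hi x hxC
      have hA : α (β x - x) - (β x - x) ∈ C (i - 1 - (n + 1)) :=
        ha (i - 1) (le_trans (Nat.sub_le i 1) hi) _ hy
      have hz : α x - x ∈ C (i - (n + 1)) := ha i hi x hxC
      have hB : β (α x - x) - (α x - x) ∈ C (i - (n + 1) - 1) :=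
        base b (i - (n + 1)) (le_trans (Nat.sub_le _ _) hi) _ hz
      have e1 : i - 1 - (n + 1) = i - (n + 2) := by omega
      have e2 : i - (n + 1) - 1 = i - (n + 2) := by omega
      rw [e1] at hA
      rw [e2] at hB
      have hv' : β (α x) = v := by
        simp [hx]
      have hid : (((a * b * a⁻¹ * b⁻¹ : H) : Multiplicative (AddAut V)).toAdd) v - v =
          (α (β x - x) - (β x - x)) - (β (α x - x) - (α x - x)) := by
        have hcoe : (((a * b * a⁻¹ * b⁻¹ : H) : Multiplicative (AddAut V)).toAdd) = α + β + -α + -β := by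
          push_cast
          rfl
        rw [hcoe]
        have h1 : (α + β + -α + -β) v = α (β x) := by
          simp [hx, AddAut.add_apply]
        rw [h1, ← hv']
        simp only [map_sub]
        abel
      rw [hid]
      exact (C _).sub_mem hA hB
  have hfinal := key (ℓ - 1)
  rw [eq_bot_iff]
  intro g hg
  obtain ⟨g, hg', rfl⟩ := hfinal hg
  have hgv : ∀ v : V, ((g : Multiplicative (AddAut V)).toAdd) v = v := by
    intro v
    have hv : v ∈ C ℓ := by rw [htop]; trivial
    have := hg' ℓ le_rfl v hv
    have e : ℓ - (ℓ - 1 + 1) = 0 := by omega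
    rw [e, hbot, AddSubgroup.mem_bot, sub_eq_zero] at this
    exact this
  have : ((g : Multiplicative (AddAut V)).toAdd) = 0 := by
    ext v
    simpa using hgv v
  rw [Subgroup.mem_bot]
  exact this
end

section
/- Let G be a finite group with a strongly embedded subgroup H: H is a proper subgroup of even order such that H ∩ H^g has odd order for every g ∈ G ∖ H. Then all involutions of G are conjugate in G. -/
/-- Bender: a finite group with a strongly embedded subgroup has a single conjugacy class
of involutions. -/
theorem stmt17 (G : Type*) [Group G] [Finite G] (H : Subgroup G)
    (hproper : H ≠ ⊤) (heven : Even (Nat.card H)) (hpos : 0 < Nat.card H)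
    (hstrong : ∀ g : G, g ∉ H →
      Odd (Nat.card (H ⊓ H.map (MulAut.conj g⁻¹).toMonoidHom : Subgroup G))) :
    ∀ i j : G, orderOf i = 2 → orderOf j = 2 → IsConj i j := by
  haveI : Fact (Nat.Prime 2) := ⟨Nat.prime_two⟩
  -- an involution cannot lie in a subgroup of odd order
  have hodd_no_inv : ∀ (K : Subgroup G), Odd (Nat.card K) → ∀ x : G,
      orderOf x = 2 → x ∉ K := by
    intro K hK x hx hxK
    have h1 : orderOf (⟨x, hxK⟩ : K) = 2 := by
      rw [← orderOf_injective K.subtype K.subtype_injective ⟨x, hxK⟩]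
      exact hx
    have h2 : 2 ∣ Nat.card K := h1 ▸ orderOf_dvd_natCard (⟨x, hxK⟩ : K)
    obtain ⟨c, hc⟩ := hK
    omega
  -- basic involution facts
  have sq1 : ∀ x : G, orderOf x = 2 → x * x = 1 := by
    intro x hx
    have h := pow_orderOf_eq_one x
    rwa [hx, pow_two] at h
  have inveq : ∀ x : G, orderOf x = 2 → x⁻¹ = x := by
    intro x hx
    exact inv_eq_of_mul_eq_one_right (sq1 x hx)
  -- Lemma A: commuting involutions, one in H, forces the other in H
  have lemA : ∀ x y : G, orderOf x = 2 → orderOf y = 2 → x * y = y * x →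
      x ∈ H → y ∈ H := by
    intro x y hx hy hcomm hxH
    by_contra hyH
    refine hodd_no_inv _ (hstrong y hyH) x hx ?_
    rw [Subgroup.mem_inf]
    refine ⟨hxH, Subgroup.mem_map.mpr ⟨x, hxH, ?_⟩⟩
    show (MulAut.conj y⁻¹) x = x
    rw [MulAut.conj_apply, inv_inv]
    calc y⁻¹ * x * y = y⁻¹ * (x * y) := by rw [mul_assoc]
      _ = y⁻¹ * (y * x) := by rw [hcomm]
      _ = x := by rw [← mul_assoc, inv_mul_cancel, one_mul]
  -- inversion of the product by each factor
  have hinvert : ∀ x y : G, orderOf x = 2 → orderOf y = 2 →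
      x * (x * y) * x⁻¹ = (x * y)⁻¹ := by
    intro x y hx hy
    rw [inveq x hx, mul_inv_rev, inveq x hx, inveq y hy]
    calc x * (x * y) * x = (x * x) * (y * x) := by group
      _ = y * x := by rw [sq1 x hx, one_mul]
  have hinvert' : ∀ x y : G, orderOf x = 2 → orderOf y = 2 →
      y * (x * y) * y⁻¹ = (x * y)⁻¹ := by
    intro x y hx hy
    rw [inveq y hy, mul_inv_rev, inveq x hx, inveq y hy]
    calc y * (x * y) * y = y * x * (y * y) := by group
      _ = y * x := by rw [sq1 y hy, mul_one]
  -- conjugation of powers of the product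
  have hpowinv : ∀ x y : G, orderOf x = 2 → orderOf y = 2 → ∀ m : ℕ,
      x * (x * y) ^ m * x⁻¹ = ((x * y)⁻¹) ^ m := by
    intro x y hx hy m
    have h := map_pow (MulAut.conj x) (x * y) m
    simp only [MulAut.conj_apply] at h
    rw [h, hinvert x y hx hy]
  -- if the product has odd order, the involutions are conjugate
  have conjOdd : ∀ x y : G, orderOf x = 2 → orderOf y = 2 →
      Odd (orderOf (x * y)) → IsConj x y := by
    intro x y hx hy hodd
    obtain ⟨k, hk⟩ := hodd
    rw [isConj_iff]
    refine ⟨(x * y) ^ k, ?_⟩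
    set w := x * y with hw
    have h2k : (w⁻¹) ^ (2 * k) = w := by
      have h := pow_orderOf_eq_one w
      rw [hk, pow_succ] at h
      have : w ^ (2 * k) = w⁻¹ := by
        rw [eq_inv_iff_mul_eq_one]; exact h
      rw [inv_pow, this, inv_inv]
    have hx' : x * w ^ k * x⁻¹ = (w⁻¹) ^ k := hpowinv x y hx hy k
    -- w^k = x⁻¹ * (w⁻¹)^k * x
    have hwk : w ^ k = x⁻¹ * (w⁻¹) ^ k * x := by
      rw [← hx']; group
    have e1 : x * (w⁻¹) ^ k * x⁻¹ = w ^ k := by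
      rw [hwk, inveq x hx]
    have hw2k : w ^ (2 * k) = w⁻¹ := by
      have h : (w ^ (2 * k))⁻¹ = w := by rw [← inv_pow]; exact h2k
      exact inv_eq_iff_eq_inv.mp h
    calc w ^ k * x * (w ^ k)⁻¹
        = w ^ k * (x * (w⁻¹) ^ k * x⁻¹) * x := by rw [← inv_pow]; group
      _ = w ^ k * w ^ k * x := by rw [e1]
      _ = w ^ (2 * k) * x := by rw [two_mul, pow_add]
      _ = w⁻¹ * x := by rw [hw2k]
      _ = y := by rw [hw, mul_inv_rev, mul_assoc, inv_mul_cancel, mul_one, inveq y hy]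
  -- Lemma D: involution in H, involution not in H, are conjugate
  have lemD : ∀ x y : G, orderOf x = 2 → orderOf y = 2 → x ∈ H → y ∉ H →
      IsConj x y := by
    intro x y hx hy hxH hyH
    set w := x * y with hw
    have hn := orderOf_pos w
    rcases Nat.even_or_odd (orderOf w) with he | ho
    · -- even case: contradiction
      exfalso
      obtain ⟨m, hm⟩ := he
      have hm' : orderOf w = 2 * m := by omega
      have hmpos : 0 < m := by omega
      set z := w ^ m with hz
      have hz1 : z ≠ 1 := by
        intro h
        have : orderOf w ∣ m := orderOf_dvd_iff_pow_eq_one.mpr h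
        have := Nat.le_of_dvd hmpos this
        omega
      have hzz : z * z = 1 := by
        rw [hz, ← pow_add, ← two_mul, ← hm', pow_orderOf_eq_one]
      have hz2 : orderOf z = 2 := orderOf_eq_prime (by rw [pow_two]; exact hzz) hz1
      have hzinv : z⁻¹ = z := inv_eq_of_mul_eq_one_right hzz
      have hcx : x * z = z * x := by
        have h := hpowinv x y hx hy m
        rw [inv_pow, ← hz, hzinv] at h
        rw [inveq x hx] at h
        calc x * z = x * z * (x * x) := by rw [sq1 x hx, mul_one]
          _ = (x * z * x) * x := by group
          _ = z * x := by rw [h]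
      have hcy : y * z = z * y := by
        have h : y * w ^ m * y⁻¹ = ((w)⁻¹) ^ m := by
          have h := map_pow (MulAut.conj y) w m
          simp only [MulAut.conj_apply] at h
          rw [h, hinvert' x y hx hy]
        rw [inv_pow, ← hz, hzinv, inveq y hy] at h
        calc y * z = y * z * (y * y) := by rw [sq1 y hy, mul_one]
          _ = (y * z * y) * y := by group
          _ = z * y := by rw [h]
      have hzH : z ∈ H := lemA x z hx hz2 hcx hxH
      exact hyH (lemA z y hz2 hy (hcy.symm) hzH)
    · exact conjOdd x y hx hy ho
  -- find an involution t in H (Cauchy)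
  haveI : Fintype H := Fintype.ofFinite H
  have hdvd : 2 ∣ Fintype.card H := by
    have : Nat.card H = Fintype.card H := Nat.card_eq_fintype_card
    rw [← this]
    exact heven.two_dvd
  obtain ⟨t₀, ht₀⟩ := exists_prime_orderOf_dvd_card 2 hdvd
  have ht : orderOf (t₀ : G) = 2 := by
    rw [← ht₀]
    exact orderOf_injective H.subtype H.subtype_injective t₀
  set t : G := (t₀ : G) with htdef
  have htH : t ∈ H := t₀.2
  -- find g₀ ∉ H
  have hex : ∃ g : G, g ∉ H := by
    by_contra h
    push_neg at h
    exact hproper ((Subgroup.eq_top_iff' H).mpr h)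
  obtain ⟨g₀, hg₀⟩ := hex
  -- s := g₀ t g₀⁻¹ is an involution not in H
  set s : G := g₀ * t * g₀⁻¹ with hsdef
  have hs2 : orderOf s = 2 := by
    have hsc : SemiconjBy g₀ t s := by
      show g₀ * t = s * g₀
      rw [hsdef]; group
    rw [← hsc.orderOf_eq g₀]
    exact ht
  have hsH : s ∉ H := by
    intro hsH
    refine hodd_no_inv _ (hstrong g₀ hg₀) t ht ?_
    rw [Subgroup.mem_inf]
    refine ⟨htH, Subgroup.mem_map.mpr ⟨s, hsH, ?_⟩⟩
    show (MulAut.conj g₀⁻¹) s = t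
    rw [MulAut.conj_apply, inv_inv, hsdef]
    group
  -- every involution is conjugate to s
  have key : ∀ x : G, orderOf x = 2 → IsConj x s := by
    intro x hx
    by_cases hxH : x ∈ H
    · exact lemD x s hx hs2 hxH hsH
    · have h1 : IsConj t x := lemD t x ht hx htH hxH
      have h2 : IsConj t s := lemD t s ht hs2 htH hsH
      exact h1.symm.trans h2
  intro i j hi hj
  exact (key i hi).trans (key j hj).symm
end
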